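/- Shatrovskii's theorem: Let h ≥ 2, let r₁ < ⋯ < r_h be pairwise relatively prime positive integers, and let P be a positive integer with P ≥ r_h − r₁ such that every prime dividing any difference r_j − r_i divides P. Define s_{i,k} = kP + r_i, S_k = ∏_i s_{i,k}, a_{i,k} = S_k/s_{i,k}, k₀ = ⌊1/(2^{1/h}−1)⌋+1, fix k₁ ≥ k₀, and let ℓ_t be the unique nonnegative integer with S_{k₁+ℓ_t} ≤ S_{k₁}^t < S_{k₁+ℓ_t+1}. Set V(t) = { a_{i,k₁+ℓ_t} v : 1 ≤ i ≤ h, 1 ≤ v ≤ (h−1)S_{k₁+ℓ_{t+1}}/a_{i,k₁+ℓ_t} } and A = [0, (h−1)S_{k₁}] ∪ ∪_{t≥1} V(t). Then A is a basis of order h: every nonnegative integer is a sum of exactly h elements of A. -/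

import Mathlib

lemma aux_inv17 (n aa m : ℕ) (hn : 2 ≤ n) (hc : Nat.Coprime aa n) :
    ∃ x : ℕ, 1 ≤ x ∧ x ≤ n ∧ (n : ℤ) ∣ (m : ℤ) - (aa : ℤ) * (x : ℤ) := by
  haveI : NeZero n := ⟨by omega⟩
  set u : (ZMod n)ˣ := ZMod.unitOfCoprime aa hc with hu
  set z : ZMod n := (↑u⁻¹ : ZMod n) * (m : ZMod n) with hz
  set x0 := z.val with hx0
  have hx0lt : x0 < n := ZMod.val_lt z
  set xx : ℕ := if x0 = 0 then n else x0 with hxx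
  have hzx : ((xx : ℕ) : ZMod n) = z := by
    rw [hxx]
    split
    · rw [ZMod.natCast_self]
      exact ((ZMod.val_eq_zero z).mp (by assumption)).symm
    · exact ZMod.natCast_rightInverse z
  refine ⟨xx, by rw [hxx]; split <;> omega, by rw [hxx]; split <;> omega, ?_⟩
  rw [← ZMod.intCast_zmod_eq_zero_iff_dvd]
  push_cast
  rw [hzx, hz]
  have ha : (aa : ZMod n) = ↑u := (ZMod.coe_unitOfCoprime aa hc).symm
  rw [ha, ← mul_assoc, u.mul_inv, one_mul, sub_self]

lemma crt_rep17 (h : ℕ) (hh : 1 ≤ h) (σ : Fin h → ℕ) (hσ : ∀ i, 2 ≤ σ i)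
    (hcop : ∀ i j, i ≠ j → Nat.Coprime (σ i) (σ j)) (m : ℕ)
    (hm : (h - 1) * ∏ i, σ i < m) :
    ∃ x : Fin h → ℕ, (∀ i, 1 ≤ x i) ∧ ∑ i, ((∏ j, σ j) / σ i) * x i = m := by
  classical
  set S := ∏ j, σ j with hSdef
  set A : Fin h → ℕ := fun i => S / σ i with hAdef
  have hσpos : ∀ i, 0 < σ i := fun i => by have := hσ i; omega
  have hdvd : ∀ i, σ i ∣ S := fun i => Finset.dvd_prod_of_mem _ (Finset.mem_univ i)
  have hAσ : ∀ i, A i * σ i = S := fun i => Nat.div_mul_cancel (hdvd i)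
  have hSpos : 0 < S := Finset.prod_pos (fun i _ => hσpos i)
  have hApos : ∀ i, 0 < A i := fun i => Nat.div_pos (Nat.le_of_dvd hSpos (hdvd i)) (hσpos i)
  have hAeq : ∀ i, A i = ∏ j ∈ Finset.univ.erase i, σ j := by
    intro i
    have h1 : S = (∏ j ∈ Finset.univ.erase i, σ j) * σ i :=
      (Finset.prod_erase_mul _ _ (Finset.mem_univ i)).symm
    rw [hAdef]
    simp only [h1, Nat.mul_div_cancel _ (hσpos i)]
  have hcopA : ∀ i, Nat.Coprime (A i) (σ i) := by
    intro i
    rw [hAeq i]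
    exact Nat.Coprime.prod_left (fun j hj => hcop j i (Finset.ne_of_mem_erase hj))
  have hAdvd : ∀ i j : Fin h, i ≠ j → σ i ∣ A j := by
    intro i j hij
    rw [hAeq j]
    exact Finset.dvd_prod_of_mem _ (Finset.mem_erase.mpr ⟨hij, Finset.mem_univ i⟩)
  choose x hx1 hx2 hx3 using fun i => aux_inv17 (σ i) (A i) m (hσ i) (hcopA i)
  set d : ℤ := (m : ℤ) - ∑ i, (A i : ℤ) * x i with hd
  have hσd : ∀ i, (σ i : ℤ) ∣ d := by
    intro i
    have hsplit : d = ((m : ℤ) - A i * x i) - ∑ j ∈ Finset.univ.erase i, (A j : ℤ) * x j := by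
      rw [hd, ← Finset.add_sum_erase _ _ (Finset.mem_univ i)]
      ring
    rw [hsplit]
    refine dvd_sub (hx3 i) (Finset.dvd_sum fun j hj => Dvd.dvd.mul_right ?_ _)
    exact_mod_cast Int.natCast_dvd_natCast.mpr (hAdvd i j (Finset.ne_of_mem_erase hj).symm)
  have hSd : (S : ℤ) ∣ d := by
    rw [hSdef]
    push_cast
    refine Finset.prod_dvd_of_coprime ?_ (fun i _ => hσd i)
    intro i _ j _ hij
    exact Nat.isCoprime_iff_coprime.mpr (hcop i j hij)
  have hsum_le : ∑ i, A i * x i ≤ h * S := by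
    calc ∑ i, A i * x i ≤ ∑ i, A i * σ i :=
          Finset.sum_le_sum (fun i _ => Nat.mul_le_mul_left _ (hx2 i))
      _ = ∑ _i : Fin h, S := by simp [hAσ]
      _ = h * S := by simp [Finset.sum_const, Finset.card_univ, mul_comm]
  have hSposZ : (0:ℤ) < S := by exact_mod_cast hSpos
  have hdlow : -(S : ℤ) < d := by
    have h1 : ((∑ i, A i * x i : ℕ) : ℤ) ≤ (h : ℤ) * S := by exact_mod_cast hsum_le
    have h3 : ((h : ℤ) - 1) * S < m := by
      have heq : (((h-1) * S : ℕ) : ℤ) = ((h:ℤ) - 1) * S := by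
        push_cast [Nat.cast_sub hh]; ring
      calc ((h:ℤ) - 1) * S = (((h-1) * S : ℕ) : ℤ) := heq.symm
        _ < m := by exact_mod_cast hm
    rw [hd]
    push_cast at h1 ⊢
    linarith
  obtain ⟨c, hc⟩ := hSd
  have hc0 : 0 ≤ c := by
    by_contra hneg
    push_neg at hneg
    have h1 : c ≤ -1 := by omega
    have h2 : (S:ℤ) * c ≤ (S:ℤ) * (-1) := mul_le_mul_of_nonneg_left h1 hSposZ.le
    rw [← hc] at h2
    linarith
  lift c to ℕ using hc0 with c' hc'
  set i₀ : Fin h := ⟨0, by omega⟩ with hi₀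
  refine ⟨fun i => x i + (if i = i₀ then c' * σ i₀ else 0), fun i =>
    le_trans (hx1 i) (Nat.le_add_right _ _), ?_⟩
  have hkey : (m : ℤ) = (∑ i, (A i : ℤ) * x i) + S * c' := by
    have h2 : (m : ℤ) - ∑ i, (A i : ℤ) * x i = (S : ℤ) * c' := hc
    linarith
  have step : ∑ i, A i * (x i + (if i = i₀ then c' * σ i₀ else 0))
      = ∑ i, A i * x i + c' * S := by
    have hterm : ∀ i, A i * (x i + (if i = i₀ then c' * σ i₀ else 0))
        = A i * x i + (if i = i₀ then A i * (c' * σ i₀) else 0) := by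
      intro i; split <;> ring
    rw [Finset.sum_congr rfl (fun i _ => hterm i), Finset.sum_add_distrib,
      Finset.sum_ite_eq' Finset.univ i₀ (fun i => A i * (c' * σ i₀))]
    simp only [Finset.mem_univ, if_true]
    rw [show A i₀ * (c' * σ i₀) = c' * (A i₀ * σ i₀) by ring, hAσ i₀]
  rw [step]
  have : ((∑ i, A i * x i + c' * S : ℕ) : ℤ) = (m : ℤ) := by
    push_cast
    linarith [hkey]
  exact_mod_cast this
theorem stmt17 (h : ℕ) (hh : 2 ≤ h) (r : Fin h → ℕ)
    (hrpos : ∀ i, 0 < r i) (hrmono : StrictMono r)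
    (hrcop : ∀ i j, i ≠ j → Nat.Coprime (r i) (r j))
    (P : ℕ) (hP : 0 < P)
    (hPge : r ⟨h - 1, by omega⟩ - r ⟨0, by omega⟩ ≤ P)
    (hPprime : ∀ i j : Fin h, i < j → ∀ p : ℕ, p.Prime → p ∣ r j - r i → p ∣ P)
    (s : Fin h → ℕ → ℕ) (hs : ∀ i k, s i k = k * P + r i)
    (S : ℕ → ℕ) (hS : ∀ k, S k = ∏ i, s i k)
    (a : Fin h → ℕ → ℕ) (ha : ∀ i k, a i k = S k / s i k)
    (k₀ : ℕ) (hk₀ : k₀ = ⌊1 / ((2 : ℝ) ^ ((1 : ℝ) / h) - 1)⌋₊ + 1)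
    (k₁ : ℕ) (hk₁ : k₀ ≤ k₁)
    (ℓ : ℕ → ℕ)
    (hℓ : ∀ t : ℕ, 1 ≤ t →
      S (k₁ + ℓ t) ≤ (S k₁) ^ t ∧ (S k₁) ^ t < S (k₁ + ℓ t + 1))
    (V : ℕ → Set ℕ)
    (hV : ∀ t : ℕ, V t = {m : ℕ | ∃ i : Fin h, ∃ v : ℕ, 1 ≤ v ∧
      v ≤ (h - 1) * S (k₁ + ℓ (t + 1)) / a i (k₁ + ℓ t) ∧ m = a i (k₁ + ℓ t) * v})
    (A : Set ℕ)
    (hA : A = {n : ℕ | n ≤ (h - 1) * S k₁} ∪ ⋃ t ∈ {t : ℕ | 1 ≤ t}, V t) :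
    ∀ n : ℕ, ∃ f : Fin h → ℕ, (∀ j, f j ∈ A) ∧ ∑ j, f j = n := by
  classical
  intro n
  have hk₁1 : 1 ≤ k₁ := by omega
  have hs1 : ∀ (i : Fin h) k, 1 ≤ s i k := by
    intro i k; rw [hs]; have := hrpos i; omega
  have hs2 : ∀ (i : Fin h) k, 1 ≤ k → 2 ≤ s i k := by
    intro i k hk
    rw [hs]
    have h1 := hrpos i
    have h2 : 1 ≤ k * P := Nat.one_le_iff_ne_zero.mpr (by positivity)
    omega
  have hSpos : ∀ k, 0 < S k := by
    intro k; rw [hS]; exact Finset.prod_pos (fun i _ => hs1 i k)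
  have hSk₁2 : 2 ≤ S k₁ := by
    rw [hS]
    calc (2:ℕ) ≤ 2 ^ h := by
          have := Nat.one_lt_two_pow_iff.mpr (show h ≠ 0 by omega); omega
      _ = ∏ _i : Fin h, 2 := by
          rw [Finset.prod_const, Finset.card_univ, Fintype.card_fin]
      _ ≤ ∏ i, s i k₁ := Finset.prod_le_prod (by intros; omega)
          (fun i _ => hs2 i k₁ hk₁1)
  have hSmono : ∀ k j, 1 ≤ j → S k < S (k + j) := by
    intro k j hj
    rw [hS, hS]
    refine Finset.prod_lt_prod_of_nonempty (fun i _ => hs1 i k) ?_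
      (Finset.univ_nonempty_iff.mpr ⟨⟨0, by omega⟩⟩)
    intro i _
    rw [hs, hs, Nat.add_mul]
    have : 0 < j * P := Nat.mul_pos (by omega) hP
    omega
  have hℓ1 : ℓ 1 = 0 := by
    by_contra hne
    have h1 := (hℓ 1 le_rfl).1
    rw [pow_one] at h1
    have := hSmono k₁ (ℓ 1) (by omega)
    omega
  have hcopk : ∀ k, ∀ i j : Fin h, i ≠ j → Nat.Coprime (s i k) (s j k) := by
    have key : ∀ k, ∀ i j : Fin h, i < j → Nat.Coprime (s i k) (s j k) := by
      intro k i j hij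
      by_contra hne
      obtain ⟨p, hp, hpd⟩ := Nat.exists_prime_and_dvd hne
      have hpi : p ∣ s i k := hpd.trans (Nat.gcd_dvd_left _ _)
      have hpj : p ∣ s j k := hpd.trans (Nat.gcd_dvd_right _ _)
      have hrij : r i < r j := hrmono hij
      have hdiff : p ∣ r j - r i := by
        have h1 : s j k - s i k = r j - r i := by rw [hs, hs]; omega
        rw [← h1]; exact Nat.dvd_sub hpj hpi
      have hpP : p ∣ P := hPprime i j hij p hp hdiff
      have hpri : p ∣ r i := by
        have h1 : p ∣ k * P := hpP.mul_left k
        have h2 : s i k - k * P = r i := by rw [hs]; omega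
        rw [← h2]; exact Nat.dvd_sub hpi h1
      have hprj : p ∣ r j := by
        have h1 : p ∣ k * P := hpP.mul_left k
        have h2 : s j k - k * P = r j := by rw [hs]; omega
        rw [← h2]; exact Nat.dvd_sub hpj h1
      have hone : p ∣ 1 := (hrcop i j hij.ne) ▸ Nat.dvd_gcd hpri hprj
      exact hp.ne_one (Nat.dvd_one.mp hone)
    intro k i j hij
    rcases lt_or_gt_of_ne hij with hlt | hgt
    · exact key k i j hlt
    · exact (key k j i hgt).symm
  by_cases hsmall : n ≤ (h - 1) * S k₁
  · set i₀ : Fin h := ⟨0, by omega⟩ with hi₀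
    refine ⟨fun j => if j = i₀ then n else 0, ?_, ?_⟩
    · intro j
      rw [hA]
      left
      simp only [Set.mem_setOf_eq]
      split
      · exact hsmall
      · exact Nat.zero_le _
    · rw [Finset.sum_ite_eq' Finset.univ i₀ (fun _ => n)]
      simp
  · push_neg at hsmall
    have hn1 : 1 ≤ n := by omega
    have hgrow : ∀ k, S (k + 1) ≤ (1 + P) ^ h * S k := by
      intro k
      rw [hS, hS]
      have hrw : (1 + P) ^ h * ∏ i, s i k = ∏ i, ((1 + P) * s i k) := by
        rw [Finset.prod_mul_distrib, Finset.prod_const, Finset.card_univ,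
          Fintype.card_fin]
      rw [hrw]
      refine Finset.prod_le_prod (by intros; exact Nat.zero_le _) ?_
      intro i _
      rw [hs, hs, Nat.add_mul]
      have h1 := hrpos i
      nlinarith [Nat.zero_le (k * P)]
    have hexQ : ∃ t, 1 ≤ t ∧ n ≤ (h - 1) * S (k₁ + ℓ (t + 1)) := by
      set Q := (1 + P) ^ h * n with hQ
      have hQ1 : 1 ≤ Q := Nat.mul_pos (by positivity) (by omega)
      refine ⟨Q, hQ1, ?_⟩
      have hT1 := (hℓ (Q + 1) (by omega)).2
      have hQlt : Q < 2 ^ Q := Nat.lt_two_pow_self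
      have hmain : (1 + P) ^ h * n < (1 + P) ^ h * S (k₁ + ℓ (Q + 1)) := by
        calc (1 + P) ^ h * n = Q := rfl
          _ < 2 ^ (Q + 1) :=
              lt_of_lt_of_le hQlt (Nat.pow_le_pow_right (by omega) (by omega))
          _ ≤ S k₁ ^ (Q + 1) := Nat.pow_le_pow_left hSk₁2 _
          _ < S (k₁ + ℓ (Q + 1) + 1) := hT1
          _ ≤ (1 + P) ^ h * S (k₁ + ℓ (Q + 1)) := hgrow _
      have hn_le : n ≤ S (k₁ + ℓ (Q + 1)) :=
        le_of_lt (lt_of_mul_lt_mul_left hmain (Nat.zero_le _))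
      calc n ≤ S (k₁ + ℓ (Q + 1)) := hn_le
        _ ≤ (h - 1) * S (k₁ + ℓ (Q + 1)) :=
            Nat.le_mul_of_pos_left _ (by omega)
    set t := Nat.find hexQ with ht
    obtain ⟨ht1, htub⟩ := Nat.find_spec hexQ
    have htlb : (h - 1) * S (k₁ + ℓ t) < n := by
      rcases eq_or_lt_of_le ht1 with h1 | h1
      · rw [ht, ← h1]
        simpa [hℓ1] using hsmall
      · have hmin := Nat.find_min hexQ (show t - 1 < t by omega)
        push_neg at hmin
        have h2 := hmin (by omega)
        have heq : t - 1 + 1 = t := by omega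
        rw [heq] at h2
        omega
    set k := k₁ + ℓ t with hk
    have hcrt := crt_rep17 h (by omega) (fun i => s i k)
      (fun i => hs2 i k (by omega)) (fun i j hij => hcopk k i j hij) n
      (by rw [← hS]; exact htlb)
    obtain ⟨x, hx1, hx2⟩ := hcrt
    have haeq : ∀ i : Fin h, a i k = (∏ j, s j k) / s i k := by
      intro i; rw [ha, hS]
    have hapos : ∀ i : Fin h, 0 < a i k := by
      intro i
      rw [ha]
      refine Nat.div_pos (Nat.le_of_dvd (hSpos k) ?_) (by have := hs1 i k; omega)
      rw [hS]; exact Finset.dvd_prod_of_mem _ (Finset.mem_univ i)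
    have hterm : ∀ j : Fin h, a j k * x j ≤ n := by
      intro j
      rw [haeq j, ← hx2]
      exact Finset.single_le_sum (f := fun i => (∏ j', s j' k) / s i k * x i)
        (fun i _ => Nat.zero_le _) (Finset.mem_univ j)
    refine ⟨fun i => a i k * x i, ?_, ?_⟩
    · intro j
      rw [hA]
      right
      refine Set.mem_biUnion (show t ∈ {t : ℕ | 1 ≤ t} from ht1) ?_
      rw [hV]
      refine ⟨j, x j, hx1 j, ?_, rfl⟩
      rw [Nat.le_div_iff_mul_le (hapos j)]
      calc x j * a j k = a j k * x j := mul_comm _ _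
        _ ≤ n := hterm j
        _ ≤ (h - 1) * S (k₁ + ℓ (t + 1)) := htub
    · have hgoal : ∑ i, a i k * x i = ∑ i, ((∏ j, s j k) / s i k) * x i := by
        refine Finset.sum_congr rfl fun i _ => ?_
        rw [haeq i]
      rw [hgoal]
      exact hx2
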